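/- Sum rule (operator identity): Σ_{p∈Λ*} (ρ̃_p ρ̃_{−p} + ρ̃_{−p} ρ̃_p) = (|Λ|/2)·1, where the sum runs over the full dual lattice Λ*. Consequently, for any β > 0, Σ_{p∈Λ*} ⟨ρ̃_p ρ̃_{−p} + ρ̃_{−p} ρ̃_p⟩_{β,0} = |Λ|/2. -/

import Mathlib

open Matrix Filter MeasureTheory

noncomputable section

/-- The periodic lattice `Λ = ({-L+1, …, L})^ν` with coordinates mod `2L`. -/
abbrev Site (ν L : ℕ) := Fin ν → ZMod (2 * L)

/-- The `μ`-th standard unit vector of the lattice. -/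
def eVec (ν L : ℕ) (μ : Fin ν) : Site ν L := fun i => if i = μ then 1 else 0

/-- The staggered sign `(-1)^{x⁽¹⁾+⋯+x⁽ᵛ⁾}`. -/
def sgn {ν L : ℕ} (x : Site ν L) : ℂ := (-1 : ℂ) ^ (∑ i, (x i).val)

/-- The exponents `θ_μ(x)` of the staggered hopping amplitudes. -/
def theta {ν L : ℕ} (μ : Fin ν) (x : Site ν L) : ℕ :=
  (∑ i : Fin ν, if (i : ℕ) < (μ : ℕ) then (x i).val else 0) +
    (if x μ = (L : ZMod (2 * L)) then 1 else 0)

variable {ν L N : ℕ}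

/-- Canonical anticommutation relations for `ψ : Λ → M_N(ℂ)`. -/
def CAR (ψ : Site ν L → Matrix (Fin N) (Fin N) ℂ) : Prop :=
  (∀ x y, ψ x * star (ψ y) + star (ψ y) * ψ x
      = if x = y then (1 : Matrix (Fin N) (Fin N) ℂ) else 0) ∧
  (∀ x y, ψ x * ψ y + ψ y * ψ x = 0)

/-- The charge density `ρ(x) = ψ(x)*ψ(x) - 1/2`. -/
def rho (ψ : Site ν L → Matrix (Fin N) (Fin N) ℂ) (x : Site ν L) :
    Matrix (Fin N) (Fin N) ℂ :=
  star (ψ x) * ψ x - (1 / 2 : ℂ) • 1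

/-- The staggered hopping Hamiltonian `H_K`. -/
def HK [NeZero (2 * L)] (κ : ℝ) (ψ : Site ν L → Matrix (Fin N) (Fin N) ℂ) :
    Matrix (Fin N) (Fin N) ℂ :=
  (Complex.I * (κ : ℂ)) • ∑ x : Site ν L, ∑ μ : Fin ν,
    ((-1 : ℂ) ^ theta μ x) •
      (star (ψ x) * ψ (x + eVec ν L μ) - star (ψ (x + eVec ν L μ)) * ψ x)

/-- The order parameter `O = Σ_x (-1)^{x⁽¹⁾+⋯+x⁽ᵛ⁾} ρ(x)`. -/
def orderOp [NeZero (2 * L)] (ψ : Site ν L → Matrix (Fin N) (Fin N) ℂ) :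
    Matrix (Fin N) (Fin N) ℂ :=
  ∑ x : Site ν L, sgn x • rho ψ x

/-- The four-fermion interaction `Σ_x Σ_μ ρ(x) ρ(x+e_μ)`. -/
def Hint [NeZero (2 * L)] (ψ : Site ν L → Matrix (Fin N) (Fin N) ℂ) :
    Matrix (Fin N) (Fin N) ℂ :=
  ∑ x : Site ν L, ∑ μ : Fin ν, rho ψ x * rho ψ (x + eVec ν L μ)

/-- The Hamiltonian `H(m) = H_K + m·O + g·H_int`. -/
def Ham [NeZero (2 * L)] (κ m g : ℝ) (ψ : Site ν L → Matrix (Fin N) (Fin N) ℂ) :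
    Matrix (Fin N) (Fin N) ℂ :=
  HK κ ψ + (m : ℂ) • orderOp ψ + (g : ℂ) • Hint ψ

/-- The thermal expectation `⟨A⟩ = tr(A e^{-βH}) / tr(e^{-βH})`. -/
def thermal (β : ℝ) (H A : Matrix (Fin N) (Fin N) ℂ) : ℂ :=
  (A * NormedSpace.exp ((-(β : ℂ)) • H)).trace /
    (NormedSpace.exp ((-(β : ℂ)) • H)).trace


/-- The dual momentum `p = (π n₁/L, …, π n_ν/L)` associated with `n ∈ Λ*`. -/
def momentum (ν L : ℕ) (n : Site ν L) : Fin ν → ℝ :=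
  fun μ => Real.pi * ((n μ).val : ℝ) / (L : ℝ)

/-- The inner product `p · x` of a dual momentum `p` (labelled by `n`) with `x`. -/
def pdot (ν L : ℕ) (n x : Site ν L) : ℝ :=
  ∑ μ : Fin ν, momentum ν L n μ * ((x μ).val : ℝ)

/-- The Fourier mode `ρ̃_p = |Λ|^{-1/2} Σ_x e^{i p·x} ρ(x)` of the charge density. -/
def rhoTilde [NeZero (2 * L)] (ψ : Site ν L → Matrix (Fin N) (Fin N) ℂ)
    (n : Site ν L) : Matrix (Fin N) (Fin N) ℂ :=
  ((Real.sqrt (Fintype.card (Site ν L)) : ℂ))⁻¹ •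
    ∑ x : Site ν L, Complex.exp (Complex.I * ((pdot ν L n x : ℝ) : ℂ)) • rho ψ x


/-! ### Auxiliary lemmas -/

section Aux

open Finset in
private lemma sum_zmod_aux (n : ℕ) [NeZero n] (f : ℕ → ℂ) :
    ∑ c : ZMod n, f c.val = ∑ k ∈ Finset.range n, f k := by
  rw [Eq.comm]
  refine Finset.sum_nbij' (i := fun k => (k : ZMod n)) (j := fun c => c.val) ?_ ?_ ?_ ?_ ?_ <;>
    intros <;>
    simp_all [ZMod.natCast_val, ZMod.val_cast_of_lt, Finset.mem_range, ZMod.val_lt,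
      Nat.mod_eq_of_lt]

private lemma exp_neg_val_aux (L : ℕ) (hL1 : 1 ≤ L) [NeZero (2*L)] (c : ZMod (2*L)) (b : ℕ) :
    Complex.exp (Complex.I * ((Real.pi * (((-c).val : ℕ) : ℝ) / L * (b:ℝ) : ℝ) : ℂ)) =
    Complex.exp (-(Complex.I * ((Real.pi * ((c.val : ℕ) : ℝ) / L * (b:ℝ) : ℝ) : ℂ))) := by
  have hL : (L:ℂ) ≠ 0 := by exact_mod_cast Nat.cast_ne_zero.mpr (by omega)
  rcases eq_or_ne c 0 with rfl | hc
  · simp [ZMod.neg_val, ZMod.val_zero]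
  · rw [ZMod.neg_val, if_neg hc]
    rw [Complex.exp_eq_exp_iff_exists_int]
    refine ⟨b, ?_⟩
    have hv : c.val ≤ 2 * L := (ZMod.val_lt c).le
    push_cast [Nat.cast_sub hv]
    field_simp
    ring

private lemma coord_orth_aux (L : ℕ) (hL1 : 1 ≤ L) [NeZero (2*L)] (a b : ZMod (2*L)) :
    ∑ c : ZMod (2*L),
      Complex.exp (Complex.I * ((Real.pi * (c.val : ℝ) / L * (a.val : ℝ) : ℝ) : ℂ)) *
      Complex.exp (Complex.I * ((Real.pi * ((-c).val : ℝ) / L * (b.val : ℝ) : ℝ) : ℂ)) =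
    if a = b then (2*L : ℂ) else 0 := by
  have hL : (L:ℂ) ≠ 0 := by exact_mod_cast Nat.cast_ne_zero.mpr (by omega)
  have hLR : (L:ℝ) ≠ 0 := by exact_mod_cast Nat.cast_ne_zero.mpr (by omega)
  set d : ℤ := (a.val : ℤ) - (b.val : ℤ) with hd
  set ζ : ℂ := Complex.exp (Complex.I * Real.pi * d / L) with hζ
  have hterm : ∀ c : ZMod (2*L),
      Complex.exp (Complex.I * ((Real.pi * (c.val : ℝ) / L * (a.val : ℝ) : ℝ) : ℂ)) *
      Complex.exp (Complex.I * ((Real.pi * ((-c).val : ℝ) / L * (b.val : ℝ) : ℝ) : ℂ))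
        = ζ ^ c.val := by
    intro c
    rw [exp_neg_val_aux L hL1, ← Complex.exp_add, hζ, ← Complex.exp_nat_mul]
    congr 1
    push_cast [hd]
    field_simp
    ring
  simp only [hterm]
  rw [sum_zmod_aux]
  have hpow : ζ ^ (2*L) = 1 := by
    rw [hζ, ← Complex.exp_nat_mul, Complex.exp_eq_one_iff]
    exact ⟨d, by push_cast; field_simp⟩
  by_cases hab : a = b
  · subst hab
    have : ζ = 1 := by simp [hζ, hd]
    simp [this]
  · have hdne : d ≠ 0 := by
      simp only [hd, sub_ne_zero]
      exact_mod_cast fun h => hab (ZMod.val_injective _ (by exact_mod_cast h))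
    have hζne : ζ ≠ 1 := by
      rw [hζ, Ne, Complex.exp_eq_one_iff]
      rintro ⟨n, hn⟩
      have h2 : (Real.pi : ℂ) ≠ 0 := by exact_mod_cast Real.pi_ne_zero
      have h3 : (Complex.I * (Real.pi:ℂ)) * d = (Complex.I * (Real.pi:ℂ)) * (2*n*L) := by
        field_simp at hn
        linear_combination (Complex.I * (Real.pi:ℂ)) * hn
      have h4 : (d : ℂ) = 2*n*L := mul_left_cancel₀ (mul_ne_zero Complex.I_ne_zero h2) h3
      have h5 : d = 2*n*L := by exact_mod_cast h4
      have ha := ZMod.val_lt a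
      have hb := ZMod.val_lt b
      rcases lt_trichotomy n 0 with h | h | h
      · nlinarith [hd, h5, Int.ofNat_lt.mpr ha, Int.ofNat_lt.mpr hb]
      · subst h; simp at h5; omega
      · nlinarith [hd, h5, Int.ofNat_lt.mpr ha, Int.ofNat_lt.mpr hb]
    rw [geom_sum_eq hζne, hpow, sub_self, zero_div, if_neg hab]

private lemma exp_pdot_aux (ν L : ℕ) [NeZero (2*L)] (n z : Site ν L) :
    Complex.exp (Complex.I * ((pdot ν L n z : ℝ) : ℂ)) =
    ∏ μ : Fin ν, Complex.exp
      (Complex.I * ((Real.pi * ((n μ).val : ℝ) / L * ((z μ).val : ℝ) : ℝ) : ℂ)) := by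
  rw [pdot]
  push_cast
  rw [Finset.mul_sum, Complex.exp_sum]
  exact Finset.prod_congr rfl fun μ _ => by rw [momentum]; push_cast; ring_nf

private lemma fourier_orth_aux (ν L : ℕ) (hL1 : 1 ≤ L) [NeZero (2*L)] (x y : Site ν L) :
    ∑ n : Site ν L, Complex.exp (Complex.I * ((pdot ν L n x : ℝ) : ℂ)) *
      Complex.exp (Complex.I * ((pdot ν L (-n) y : ℝ) : ℂ)) =
    if x = y then ((Fintype.card (Site ν L)) : ℂ) else 0 := by
  have key : ∑ n : Site ν L, ∏ μ : Fin ν,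
      (Complex.exp (Complex.I * ((Real.pi * ((n μ).val : ℝ) / L * ((x μ).val : ℝ) : ℝ) : ℂ)) *
       Complex.exp
        (Complex.I * ((Real.pi * (((-(n μ)).val : ℕ) : ℝ) / L * ((y μ).val : ℝ) : ℝ) : ℂ))) =
      ∏ μ : Fin ν, (if x μ = y μ then (2*L : ℂ) else 0) := by
    have := (Finset.prod_univ_sum (fun _ : Fin ν => (Finset.univ : Finset (ZMod (2*L))))
      (fun μ c => Complex.exp
          (Complex.I * ((Real.pi * ((c.val : ℕ) : ℝ) / L * ((x μ).val : ℝ) : ℝ) : ℂ)) *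
        Complex.exp
          (Complex.I * ((Real.pi * (((-c).val : ℕ) : ℝ) / L * ((y μ).val : ℝ) : ℝ) : ℂ)))).symm
    rw [Fintype.piFinset_univ] at this
    rw [this]
    exact Finset.prod_congr rfl fun μ _ => coord_orth_aux L hL1 (x μ) (y μ)
  calc ∑ n : Site ν L, Complex.exp (Complex.I * ((pdot ν L n x : ℝ) : ℂ)) *
      Complex.exp (Complex.I * ((pdot ν L (-n) y : ℝ) : ℂ))
      = ∑ n : Site ν L, ∏ μ : Fin ν,
      (Complex.exp (Complex.I * ((Real.pi * ((n μ).val : ℝ) / L * ((x μ).val : ℝ) : ℝ) : ℂ)) *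
       Complex.exp
        (Complex.I * ((Real.pi * (((-(n μ)).val : ℕ) : ℝ) / L * ((y μ).val : ℝ) : ℝ) : ℂ))) := by
        refine Finset.sum_congr rfl fun n _ => ?_
        rw [exp_pdot_aux, exp_pdot_aux, ← Finset.prod_mul_distrib]
        exact Finset.prod_congr rfl fun μ _ => by rw [Pi.neg_apply]
    _ = ∏ μ : Fin ν, (if x μ = y μ then (2*L : ℂ) else 0) := key
    _ = if x = y then ((Fintype.card (Site ν L)) : ℂ) else 0 := by
        by_cases h : x = y
        · subst h
          simp [Fintype.card_fun, ZMod.card]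
        · rw [if_neg h]
          obtain ⟨μ, hμ⟩ : ∃ μ, x μ ≠ y μ := by
            by_contra hc; push_neg at hc; exact h (funext hc)
          exact Finset.prod_eq_zero (Finset.mem_univ μ) (if_neg hμ)

private lemma rho_sq_abs {N : ℕ} (a : Matrix (Fin N) (Fin N) ℂ)
    (h1 : a * star a + star a * a = 1) (h2 : a * a + a * a = 0) :
    (star a * a - (1/2:ℂ) • 1) * (star a * a - (1/2:ℂ) • 1) = (1/4:ℂ) • 1 := by
  have h2' : a * a = 0 := by
    have : (2:ℂ) • (a * a) = 0 := by rw [two_smul]; exact h2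
    simpa using this
  have key : (star a * a) * (star a * a) = star a * a := by
    have hab : a * star a = 1 - star a * a := eq_sub_of_add_eq h1
    calc (star a * a) * (star a * a) = star a * (a * star a) * a := by noncomm_ring
    _ = star a * (1 - star a * a) * a := by rw [hab]
    _ = star a * a - (star a * star a) * (a * a) := by noncomm_ring
    _ = star a * a := by rw [h2', mul_zero, sub_zero]
  rw [sub_mul, mul_sub, mul_sub, key, smul_mul_assoc, mul_smul_comm, one_mul, mul_one,
    smul_mul_assoc, mul_smul_comm, smul_smul, one_mul]
  module

private lemma rho_comm_abs {N : ℕ} (a b : Matrix (Fin N) (Fin N) ℂ)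
    (hab : a * b + b * a = 0) (hab' : a * star b + star b * a = 0)
    (hba' : b * star a + star a * b = 0) :
    (star a * a - (1/2:ℂ) • 1) * (star b * b - (1/2:ℂ) • 1)
      = (star b * b - (1/2:ℂ) • 1) * (star a * a - (1/2:ℂ) • 1) := by
  have h1 : a * b = -(b * a) := eq_neg_of_add_eq_zero_left hab
  have h2 : a * star b = -(star b * a) := eq_neg_of_add_eq_zero_left hab'
  have h3 : star a * b = -(b * star a) := eq_neg_of_add_eq_zero_right hba'
  have h4 : star a * star b = -(star b * star a) := by
    have := congrArg star hab
    simp only [star_add, Matrix.star_mul, star_zero] at this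
    exact eq_neg_of_add_eq_zero_right this
  have key : (star a * a) * (star b * b) = (star b * b) * (star a * a) := by
    calc (star a * a) * (star b * b) = star a * (a * star b) * b := by noncomm_ring
    _ = star a * (-(star b * a)) * b := by rw [h2]
    _ = -((star a * star b) * (a * b)) := by noncomm_ring
    _ = -((star a * star b) * (-(b * a))) := by rw [h1]
    _ = (star a * star b) * (b * a) := by noncomm_ring
    _ = (-(star b * star a)) * (b * a) := by rw [h4]
    _ = -(star b * (star a * b) * a) := by noncomm_ring
    _ = -(star b * (-(b * star a)) * a) := by rw [h3]
    _ = (star b * b) * (star a * a) := by noncomm_ring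
  simp only [sub_mul, mul_sub, smul_mul_assoc, mul_smul_comm, one_mul, mul_one, key]
  module

private lemma trace_exp_ne_zero {N : ℕ} (hN : 1 ≤ N) (M : Matrix (Fin N) (Fin N) ℂ)
    (hM : Mᴴ = M) : (NormedSpace.exp M).trace ≠ 0 := by
  set A : Matrix (Fin N) (Fin N) ℂ := (1/2 : ℂ) • M with hA
  have hAH : Aᴴ = A := by rw [hA, conjTranspose_smul, hM]; norm_num
  set B := NormedSpace.exp A with hB
  have hBH : Bᴴ = B := by rw [hB, ← Matrix.exp_conjTranspose, hAH]
  have hsplit : NormedSpace.exp M = Bᴴ * B := by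
    rw [hBH, hB, ← Matrix.exp_add_of_commute A A (Commute.refl A)]
    congr 1
    rw [hA, ← two_smul ℂ, smul_smul]
    norm_num
  have hinv : B * NormedSpace.exp (-A) = 1 := by
    rw [hB, ← Matrix.exp_add_of_commute A (-A) (Commute.neg_right (Commute.refl A)),
      add_neg_cancel, NormedSpace.exp_zero]
  have hBne : B ≠ 0 := by
    intro h
    rw [h, zero_mul] at hinv
    have i : Fin N := ⟨0, hN⟩
    have := congrFun (congrFun hinv i) i
    simp [Matrix.one_apply] at this
  have htr : (NormedSpace.exp M).trace =
      ((∑ i : Fin N, ∑ j : Fin N, Complex.normSq (B j i) : ℝ) : ℂ) := by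
    rw [hsplit, Matrix.trace]
    push_cast
    refine Finset.sum_congr rfl fun i _ => ?_
    simp only [Matrix.diag_apply, Matrix.mul_apply, Matrix.conjTranspose_apply]
    refine Finset.sum_congr rfl fun j _ => ?_
    rw [Complex.normSq_eq_conj_mul_self]; rfl
  rw [htr]
  intro h
  have hsum : (∑ i : Fin N, ∑ j : Fin N, Complex.normSq (B j i) : ℝ) = 0 := by
    exact_mod_cast h
  have hzero : ∀ i j : Fin N, Complex.normSq (B j i) = 0 := by
    intro i j
    have h1 : ∀ i ∈ Finset.univ, (0:ℝ) ≤ ∑ j : Fin N, Complex.normSq (B j i) :=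
      fun i _ => Finset.sum_nonneg fun j _ => Complex.normSq_nonneg _
    have h2 := (Finset.sum_eq_zero_iff_of_nonneg h1).mp hsum i (Finset.mem_univ i)
    exact (Finset.sum_eq_zero_iff_of_nonneg
      (fun j _ => Complex.normSq_nonneg (B j i))).mp h2 j (Finset.mem_univ j)
  apply hBne
  ext i j
  simpa [Complex.normSq_eq_zero] using hzero j i

end Aux

section Herm

variable {ν L N : ℕ}

private lemma rho_sq {ψ : Site ν L → Matrix (Fin N) (Fin N) ℂ} (hCAR : CAR ψ)
    (x : Site ν L) : rho ψ x * rho ψ x = (1/4 : ℂ) • 1 := by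
  rw [rho]
  exact rho_sq_abs (ψ x) (by simpa using hCAR.1 x x) (hCAR.2 x x)

private lemma rho_comm {ψ : Site ν L → Matrix (Fin N) (Fin N) ℂ} (hCAR : CAR ψ)
    {x y : Site ν L} (hxy : x ≠ y) : rho ψ x * rho ψ y = rho ψ y * rho ψ x := by
  rw [rho, rho]
  refine rho_comm_abs (ψ x) (ψ y) (hCAR.2 x y) ?_ ?_
  · have := hCAR.1 x y; rwa [if_neg hxy] at this
  · have := hCAR.1 y x; rwa [if_neg (Ne.symm hxy)] at this

private lemma rho_star (ψ : Site ν L → Matrix (Fin N) (Fin N) ℂ) (x : Site ν L) :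
    star (rho ψ x) = rho ψ x := by
  simp only [rho, star_sub, Matrix.star_mul, star_star, star_smul, star_one]
  congr 1
  simp [Complex.star_def]

private lemma ne_add_eVec [NeZero (2*L)] (hL : 1 ≤ L) (x : Site ν L) (μ : Fin ν) :
    x ≠ x + eVec ν L μ := by
  haveI : Fact (1 < 2*L) := ⟨by omega⟩
  intro h
  have h1 := congrFun h μ
  rw [Pi.add_apply, eVec, if_pos rfl] at h1
  exact one_ne_zero (left_eq_add.mp h1)

private lemma hk_herm [NeZero (2*L)] (κ : ℝ) (ψ : Site ν L → Matrix (Fin N) (Fin N) ℂ) :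
    star (HK κ ψ) = HK κ ψ := by
  have hterm : ∀ (x : Site ν L) (μ : Fin ν),
      star (((-1 : ℂ) ^ theta μ x) •
        (star (ψ x) * ψ (x + eVec ν L μ) - star (ψ (x + eVec ν L μ)) * ψ x)) =
      -(((-1 : ℂ) ^ theta μ x) •
        (star (ψ x) * ψ (x + eVec ν L μ) - star (ψ (x + eVec ν L μ)) * ψ x)) := by
    intro x μ
    rw [star_smul, star_sub, Matrix.star_mul, Matrix.star_mul, star_star, star_star]
    rw [show star ((-1:ℂ) ^ theta μ x) = (-1:ℂ) ^ theta μ x by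
      simp [Complex.star_def, map_pow]]
    rw [← smul_neg, neg_sub]
  rw [HK, star_smul, star_sum]
  simp only [star_sum, hterm, Finset.sum_neg_distrib]
  rw [show star (Complex.I * (κ:ℂ)) = -(Complex.I * (κ:ℂ)) by
    simp [Complex.star_def]; try ring]
  rw [smul_neg, neg_smul, neg_neg]

private lemma hint_herm [NeZero (2*L)] (hL : 1 ≤ L)
    {ψ : Site ν L → Matrix (Fin N) (Fin N) ℂ} (hCAR : CAR ψ) :
    star (Hint ψ) = Hint ψ := by
  rw [Hint, star_sum]
  refine Finset.sum_congr rfl fun x _ => ?_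
  rw [star_sum]
  refine Finset.sum_congr rfl fun μ _ => ?_
  rw [Matrix.star_mul, rho_star, rho_star, rho_comm hCAR (Ne.symm (ne_add_eVec hL x μ))]

private lemma ham_herm [NeZero (2*L)] (hL : 1 ≤ L) (κ g : ℝ)
    {ψ : Site ν L → Matrix (Fin N) (Fin N) ℂ} (hCAR : CAR ψ) :
    star (Ham κ 0 g ψ) = Ham κ 0 g ψ := by
  rw [Ham]
  simp only [Complex.ofReal_zero, zero_smul, add_zero, star_add, star_smul,
    hk_herm, hint_herm hL hCAR]
  rw [show star ((g:ℝ):ℂ) = ((g:ℝ):ℂ) by simp [Complex.star_def]]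

end Herm

/-- **Sum rule**: the operator identity
`Σ_{p ∈ Λ*} (ρ̃_p ρ̃_{-p} + ρ̃_{-p} ρ̃_p) = (|Λ|/2)·1` holds, where the sum runs over
the full dual lattice; consequently for any `β > 0` the thermal expectations sum to
`|Λ|/2`. -/
theorem sum_rule (ν L N : ℕ) [NeZero (2 * L)]
    (hν : 2 ≤ ν) (hL : 1 ≤ L) (hN : 1 ≤ N)
    (ψ : Site ν L → Matrix (Fin N) (Fin N) ℂ) (hCAR : CAR ψ) :
    (∑ n : Site ν L,
        (rhoTilde ψ n * rhoTilde ψ (-n) + rhoTilde ψ (-n) * rhoTilde ψ n) =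
        ((Fintype.card (Site ν L) : ℂ) / 2) • (1 : Matrix (Fin N) (Fin N) ℂ)) ∧
    (∀ (κ g β : ℝ), 0 ≤ g → 0 < β →
        ∑ n : Site ν L,
          thermal β (Ham κ 0 g ψ)
            (rhoTilde ψ n * rhoTilde ψ (-n) + rhoTilde ψ (-n) * rhoTilde ψ n) =
          (Fintype.card (Site ν L) : ℂ) / 2) := by
  set card := Fintype.card (Site ν L) with hcarddef
  have hcardpos : 0 < card := Fintype.card_pos
  set e : Site ν L → Site ν L → ℂ :=
    fun n x => Complex.exp (Complex.I * ((pdot ν L n x : ℝ) : ℂ)) with he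
  set S : Site ν L → Matrix (Fin N) (Fin N) ℂ :=
    fun n => ∑ x : Site ν L, e n x • rho ψ x with hSdef
  set c : ℂ := ((Real.sqrt card : ℝ) : ℂ)⁻¹ with hcdef
  have hrt : ∀ n, rhoTilde ψ n = c • S n := fun n => rfl
  have hc2 : c * c = ((card : ℕ) : ℂ)⁻¹ := by
    rw [hcdef, ← mul_inv, ← Complex.ofReal_mul,
      Real.mul_self_sqrt (Nat.cast_nonneg card), Complex.ofReal_natCast]
  have hprod : ∀ n m : Site ν L, S n * S m =
      ∑ x : Site ν L, ∑ y : Site ν L, (e n x * e m y) • (rho ψ x * rho ψ y) := by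
    intro n m
    rw [hSdef]
    rw [Finset.sum_mul_sum]
    exact Finset.sum_congr rfl fun x _ => Finset.sum_congr rfl fun y _ => by
      rw [smul_mul_assoc, mul_smul_comm, smul_smul]
  have hsum1 : ∀ x y : Site ν L,
      ∑ n : Site ν L, e n x * e (-n) y = if x = y then ((card : ℕ) : ℂ) else 0 :=
    fun x y => fourier_orth_aux ν L hL x y
  have hsum2 : ∀ x y : Site ν L,
      ∑ n : Site ν L, e (-n) x * e n y = if x = y then ((card : ℕ) : ℂ) else 0 := by
    intro x y
    calc ∑ n : Site ν L, e (-n) x * e n y = ∑ n : Site ν L, e n x * e (-n) y :=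
        Fintype.sum_equiv (Equiv.neg _) _ _ (fun n => by simp)
    _ = if x = y then ((card : ℕ) : ℂ) else 0 := hsum1 x y
  have swap : ∀ cf : Site ν L → Site ν L → Site ν L → ℂ,
      ∑ n : Site ν L, ∑ x : Site ν L, ∑ y : Site ν L, cf n x y • (rho ψ x * rho ψ y)
      = ∑ x : Site ν L, ∑ y : Site ν L, (∑ n : Site ν L, cf n x y) • (rho ψ x * rho ψ y) := by
    intro cf
    rw [Finset.sum_comm]
    refine Finset.sum_congr rfl fun x _ => ?_
    rw [Finset.sum_comm]
    refine Finset.sum_congr rfl fun y _ => ?_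
    rw [Finset.sum_smul]
  have collapse : ∀ f : Site ν L → Site ν L → ℂ,
      (∀ x y, f x y = if x = y then ((card : ℕ) : ℂ) else 0) →
      ∑ x : Site ν L, ∑ y : Site ν L, f x y • (rho ψ x * rho ψ y)
        = ∑ x : Site ν L, ((card : ℕ) : ℂ) • (rho ψ x * rho ψ x) := by
    intro f hf
    refine Finset.sum_congr rfl fun x _ => ?_
    rw [Finset.sum_eq_single x]
    · rw [hf, if_pos rfl]
    · intro y _ hyx
      rw [hf, if_neg (fun h => hyx h.symm), zero_smul]
    · intro h; exact absurd (Finset.mem_univ x) h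
  have hSS1 : ∑ n : Site ν L, S n * S (-n)
      = ∑ x : Site ν L, ((card : ℕ) : ℂ) • (rho ψ x * rho ψ x) := by
    calc ∑ n : Site ν L, S n * S (-n)
        = ∑ n : Site ν L, ∑ x : Site ν L, ∑ y : Site ν L,
            (e n x * e (-n) y) • (rho ψ x * rho ψ y) :=
          Finset.sum_congr rfl fun n _ => hprod n (-n)
      _ = ∑ x : Site ν L, ∑ y : Site ν L,
            (∑ n : Site ν L, e n x * e (-n) y) • (rho ψ x * rho ψ y) := swap _
      _ = _ := collapse _ hsum1
  have hSS2 : ∑ n : Site ν L, S (-n) * S n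
      = ∑ x : Site ν L, ((card : ℕ) : ℂ) • (rho ψ x * rho ψ x) := by
    calc ∑ n : Site ν L, S (-n) * S n
        = ∑ n : Site ν L, ∑ x : Site ν L, ∑ y : Site ν L,
            (e (-n) x * e n y) • (rho ψ x * rho ψ y) :=
          Finset.sum_congr rfl fun n _ => hprod (-n) n
      _ = ∑ x : Site ν L, ∑ y : Site ν L,
            (∑ n : Site ν L, e (-n) x * e n y) • (rho ψ x * rho ψ y) := swap _
      _ = _ := collapse _ hsum2
  have hdiag : ∑ x : Site ν L, ((card : ℕ) : ℂ) • (rho ψ x * rho ψ x)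
      = (((card : ℕ) : ℂ) * ((card : ℕ) : ℂ) / 4) • (1 : Matrix (Fin N) (Fin N) ℂ) := by
    have : ∀ x : Site ν L, ((card : ℕ) : ℂ) • (rho ψ x * rho ψ x)
        = (((card : ℕ) : ℂ) / 4) • (1 : Matrix (Fin N) (Fin N) ℂ) := by
      intro x
      rw [rho_sq hCAR, smul_smul]
      ring_nf
    rw [Finset.sum_congr rfl fun x _ => this x, Finset.sum_const, Finset.card_univ,
      ← hcarddef, ← Nat.cast_smul_eq_nsmul ℂ, smul_smul]
    congr 1
    ring
  have hmain : ∑ n : Site ν L,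
      (rhoTilde ψ n * rhoTilde ψ (-n) + rhoTilde ψ (-n) * rhoTilde ψ n)
      = (((card : ℕ) : ℂ) / 2) • (1 : Matrix (Fin N) (Fin N) ℂ) := by
    have step : ∀ n : Site ν L,
        rhoTilde ψ n * rhoTilde ψ (-n) + rhoTilde ψ (-n) * rhoTilde ψ n
        = (c * c) • (S n * S (-n) + S (-n) * S n) := by
      intro n
      rw [hrt, hrt, smul_mul_assoc, mul_smul_comm, smul_smul,
        smul_mul_assoc, mul_smul_comm, smul_smul, smul_add]
    have hne : ((card : ℕ) : ℂ) ≠ 0 := Nat.cast_ne_zero.mpr hcardpos.ne'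
    rw [Finset.sum_congr rfl fun n _ => step n, ← Finset.smul_sum,
      Finset.sum_add_distrib, hSS1, hSS2, hdiag, ← two_smul ℂ, smul_smul, smul_smul, hc2]
    congr 1
    field_simp
    ring
  refine ⟨hmain, ?_⟩
  intro κ g β hg hβ
  have hH := ham_herm (ν := ν) (L := L) hL κ g hCAR
  have hMh : ((-(β:ℂ)) • Ham κ 0 g ψ)ᴴ = (-(β:ℂ)) • Ham κ 0 g ψ := by
    rw [Matrix.conjTranspose_smul, ← Matrix.star_eq_conjTranspose, hH]
    congr 1
    simp [Complex.star_def]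
  have hT : (NormedSpace.exp ((-(β:ℂ)) • Ham κ 0 g ψ)).trace ≠ 0 :=
    trace_exp_ne_zero hN _ hMh
  calc ∑ n : Site ν L, thermal β (Ham κ 0 g ψ)
        (rhoTilde ψ n * rhoTilde ψ (-n) + rhoTilde ψ (-n) * rhoTilde ψ n)
      = thermal β (Ham κ 0 g ψ) (∑ n : Site ν L,
          (rhoTilde ψ n * rhoTilde ψ (-n) + rhoTilde ψ (-n) * rhoTilde ψ n)) := by
        simp only [thermal]
        rw [← Finset.sum_div]
        congr 1
        rw [← Matrix.trace_sum, ← Finset.sum_mul]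
    _ = ((card : ℕ) : ℂ) / 2 := by
        rw [hmain, thermal, smul_mul_assoc, one_mul, Matrix.trace_smul, smul_eq_mul,
          mul_div_assoc, div_self hT, mul_one]

end
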